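/- Let a₁, a₂ ∈ ℝ and b₁, b₂ > 0, and let e be a real random variable with P(a₁ − b₁e = 0) = 0, P(a₂ + b₂e = 0) = 0, E(|log|a₁ − b₁e||) < ∞ and E(|log|a₂ + b₂e||) < ∞. Set p₁ = P(a₁ − b₁e < 0), p₂ = P(a₂ + b₂e < 0), and assume p₁ + p₂ > 0. Define z(−1, u) = −a₁ + b₁u and z(1, u) = a₂ + b₂u, define log ρ = (p₂ E(log|a₁ − b₁e|) + p₁ E(log|a₂ + b₂e|))/(p₁ + p₂), and define ν(1) = −ν(−1) = (E(log|a₂ + b₂e|) − E(log|a₁ − b₁e|))/(2(p₁ + p₂)). Then for each θ ∈ {−1, 1}: E(ν(sgn z(θ, e)) − ν(θ) + log|z(θ, e)|) = log ρ. -/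

import Mathlib

open MeasureTheory

/-- Let `a₁, a₂ ∈ ℝ`, `b₁, b₂ > 0`, and `e` a real random variable
with `P(a₁ − b₁e = 0) = 0`, `P(a₂ + b₂e = 0) = 0` and integrable `log|a₁ − b₁e|`,
`log|a₂ + b₂e|`.  With `p₁ = P(a₁ − b₁e < 0)`, `p₂ = P(a₂ + b₂e < 0)`, `p₁ + p₂ > 0`,
`z(−1,u) = −a₁ + b₁u`, `z(1,u) = a₂ + b₂u`,
`log ρ = (p₂ E log|a₁−b₁e| + p₁ E log|a₂+b₂e|)/(p₁+p₂)` and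
`ν(1) = −ν(−1) = (E log|a₂+b₂e| − E log|a₁−b₁e|)/(2(p₁+p₂))`, for each `θ ∈ {−1,1}`:
`E(ν(sgn z(θ,e)) − ν(θ) + log|z(θ,e)|) = log ρ` (with `sgn t = 1` for `t > 0` and
`−1` for `t ≤ 0`, the case `t = 0` having probability zero). -/
theorem stmt15 {Ω : Type*} [MeasurableSpace Ω] (μ : Measure Ω) [IsProbabilityMeasure μ]
    (e : Ω → ℝ) (he : Measurable e) (a₁ a₂ b₁ b₂ : ℝ) (hb₁ : 0 < b₁) (hb₂ : 0 < b₂)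
    (h10 : μ {ω | a₁ - b₁ * e ω = 0} = 0) (h20 : μ {ω | a₂ + b₂ * e ω = 0} = 0)
    (hint1 : Integrable (fun ω => Real.log |a₁ - b₁ * e ω|) μ)
    (hint2 : Integrable (fun ω => Real.log |a₂ + b₂ * e ω|) μ)
    (p₁ p₂ logρ ν₁ : ℝ)
    (hp₁ : p₁ = (μ {ω | a₁ - b₁ * e ω < 0}).toReal)
    (hp₂ : p₂ = (μ {ω | a₂ + b₂ * e ω < 0}).toReal)
    (hp : 0 < p₁ + p₂)
    (hρ : logρ = (p₂ * ∫ ω, Real.log |a₁ - b₁ * e ω| ∂μ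
        + p₁ * ∫ ω, Real.log |a₂ + b₂ * e ω| ∂μ) / (p₁ + p₂))
    (hν : ν₁ = ((∫ ω, Real.log |a₂ + b₂ * e ω| ∂μ)
        - ∫ ω, Real.log |a₁ - b₁ * e ω| ∂μ) / (2 * (p₁ + p₂))) :
    (∫ ω, ((if 0 < -a₁ + b₁ * e ω then ν₁ else -ν₁) - (-ν₁)
        + Real.log |(-a₁) + b₁ * e ω|) ∂μ = logρ) ∧
      (∫ ω, ((if 0 < a₂ + b₂ * e ω then ν₁ else -ν₁) - ν₁
        + Real.log |a₂ + b₂ * e ω|) ∂μ = logρ) := by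
  have hne : p₁ + p₂ ≠ 0 := ne_of_gt hp
  have hm1 : MeasurableSet {ω | a₁ - b₁ * e ω < 0} :=
    measurableSet_lt (measurable_const.sub (measurable_const.mul he)) measurable_const
  have hm2 : MeasurableSet {ω | a₂ + b₂ * e ω < 0} :=
    measurableSet_lt (measurable_const.add (measurable_const.mul he)) measurable_const
  have hi1 : Integrable ({ω | a₁ - b₁ * e ω < 0}.indicator (fun _ => (2:ℝ)*ν₁)) μ :=
    (integrable_const _).indicator hm1
  have hi2 : Integrable ({ω | a₂ + b₂ * e ω < 0}.indicator (fun _ => (-2:ℝ)*ν₁)) μ :=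
    (integrable_const _).indicator hm2
  constructor
  · have heq : ∀ ω, ((if 0 < -a₁ + b₁ * e ω then ν₁ else -ν₁) - (-ν₁)
        + Real.log |(-a₁) + b₁ * e ω|)
        = {ω | a₁ - b₁ * e ω < 0}.indicator (fun _ => (2:ℝ)*ν₁) ω
          + Real.log |a₁ - b₁ * e ω| := by
      intro ω
      have habs : |(-a₁) + b₁ * e ω| = |a₁ - b₁ * e ω| := by
        rw [← abs_neg]; ring_nf
      rw [habs]
      by_cases h : a₁ - b₁ * e ω < 0
      · have h' : 0 < -a₁ + b₁ * e ω := by linarith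
        have : ω ∈ {ω | a₁ - b₁ * e ω < 0} := h
        rw [Set.indicator_of_mem this, if_pos h']
        ring
      · have h' : ¬ (0 < -a₁ + b₁ * e ω) := fun hc => h (by linarith)
        have : ω ∉ {ω | a₁ - b₁ * e ω < 0} := h
        rw [Set.indicator_of_notMem this, if_neg h']
        ring
    rw [integral_congr_ae (Filter.Eventually.of_forall heq), integral_add hi1 hint1,
      integral_indicator_const _ hm1, smul_eq_mul, measureReal_def, ← hp₁, hρ, hν]
    field_simp
    ring
  · have h20' : ∀ᵐ ω ∂μ, a₂ + b₂ * e ω ≠ 0 := by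
      rw [ae_iff]
      simpa using h20
    have heq : ∀ᵐ ω ∂μ, ((if 0 < a₂ + b₂ * e ω then ν₁ else -ν₁) - ν₁
        + Real.log |a₂ + b₂ * e ω|)
        = {ω | a₂ + b₂ * e ω < 0}.indicator (fun _ => (-2:ℝ)*ν₁) ω
          + Real.log |a₂ + b₂ * e ω| := by
      filter_upwards [h20'] with ω hω
      by_cases h : 0 < a₂ + b₂ * e ω
      · have : ω ∉ {ω | a₂ + b₂ * e ω < 0} := by
          simp only [Set.mem_setOf_eq]; linarith
        rw [Set.indicator_of_notMem this, if_pos h]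
        ring
      · have hlt : a₂ + b₂ * e ω < 0 := lt_of_le_of_ne (not_lt.mp h) hω
        have : ω ∈ {ω | a₂ + b₂ * e ω < 0} := hlt
        rw [Set.indicator_of_mem this, if_neg h]
        ring
    rw [integral_congr_ae heq, integral_add hi2 hint2,
      integral_indicator_const _ hm2, smul_eq_mul, measureReal_def, ← hp₂, hρ, hν]
    field_simp
    ring
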